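/- Let F be a finite family of convex sets in ℝ^d, each of affine dimension at most j. Then for every subfamily G ⊆ F, the common intersection of the sets in G is nonempty if and only if every subset of G of cardinality at most j+2 has a nonempty common intersection. (Equivalently: the nerve of a finite family of at most j-dimensional convex sets is determined by its (j+1)-skeleton.) -/

import Mathlib

/-- The nerve of a finite family of at most `j`-dimensional convex sets in `ℝ^d` is determined
by its `(j+1)`-skeleton: for every subfamily `G`, the common intersection of the sets in `G` is
nonempty if and only if every subset of `G` of cardinality at most `j + 2` has a nonempty
common intersection. -/
theorem nerve_determined_by_skeleton (d j : ℕ) (ι : Type*) [Fintype ι]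
    (F : ι → Set (EuclideanSpace ℝ (Fin d)))
    (hconv : ∀ i, Convex ℝ (F i))
    (hdim : ∀ i, Module.finrank ℝ (affineSpan ℝ (F i)).direction ≤ j) :
    ∀ G : Finset ι,
      (⋂ i ∈ G, F i).Nonempty ↔
        (∀ S ⊆ G, S.card ≤ j + 2 → (⋂ i ∈ S, F i).Nonempty) := by
  classical
  intro G
  constructor
  · rintro ⟨x, hx⟩ S hS _
    exact ⟨x, Set.mem_biInter fun i hi => Set.mem_iInter₂.mp hx i (hS hi)⟩
  · intro h
    rcases G.eq_empty_or_nonempty with rfl | ⟨i0, hi0⟩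
    · simp
    -- `F i0` is nonempty
    obtain ⟨p, hp⟩ : (F i0).Nonempty := by
      have := h {i0} (Finset.singleton_subset_iff.mpr hi0) (by simp)
      simpa using this
    let W := (affineSpan ℝ (F i0)).direction
    -- the affine map `w ↦ p + w` from `W` to `E`
    let f : W →ᵃ[ℝ] EuclideanSpace ℝ (Fin d) :=
      (AffineEquiv.constVAdd ℝ (EuclideanSpace ℝ (Fin d)) p).toAffineMap.comp W.subtype.toAffineMap
    have hf : ∀ w : W, f w = (w : EuclideanSpace ℝ (Fin d)) + p := by
      intro w
      simp [f, AffineEquiv.constVAdd, vadd_eq_add, add_comm]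
      rfl
    let B : ι → Set W := fun i => f ⁻¹' (F i ∩ F i0)
    have hBconv : ∀ i ∈ G, Convex ℝ (B i) :=
      fun i _ => ((hconv i).inter (hconv i0)).affine_preimage f
    have hdimW : Module.finrank ℝ W ≤ j := hdim i0
    have hBinter : ∀ I ⊆ G, I.card ≤ Module.finrank ℝ W + 1 → (⋂ i ∈ I, B i).Nonempty := by
      intro I hIG hIcard
      have hScard : (insert i0 I).card ≤ j + 2 := by
        have := Finset.card_insert_le i0 I
        omega
      have hSsub : insert i0 I ⊆ G := Finset.insert_subset hi0 hIG
      obtain ⟨x, hx⟩ := h (insert i0 I) hSsub hScard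
      have hxi0 : x ∈ F i0 := Set.mem_iInter₂.mp hx i0 (Finset.mem_insert_self _ _)
      have hxW : x - p ∈ W := by
        have := AffineSubspace.vsub_mem_direction
          (subset_affineSpan ℝ _ hxi0) (subset_affineSpan ℝ _ hp)
        simpa using this
      refine ⟨⟨x - p, hxW⟩, Set.mem_biInter fun i hi => ?_⟩
      have hxi : x ∈ F i := Set.mem_iInter₂.mp hx i (Finset.mem_insert_of_mem hi)
      show f _ ∈ F i ∩ F i0
      rw [hf]
      simpa using ⟨hxi, hxi0⟩
    obtain ⟨w, hw⟩ := Convex.helly_theorem' (s := G) hBconv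
      (fun I hI hc => hBinter I hI hc)
    refine ⟨f w, Set.mem_biInter fun i hi => ?_⟩
    exact (Set.mem_iInter₂.mp hw i hi).1
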